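/- Let 0<q<1, λ>0, μ>0, and let v* ∈ argmin_{v∈ℝ} { (z-v)²/(2μ) + λ|v|^q } for a given z ∈ ℝ. Then either v* = 0 or |v*| ≥ (2λμ(1-q))^{1/(2-q)}. -/

import Mathlib

lemma prox_aux (q lam mu z t : ℝ) (hq0 : 0 < q) (hq1 : q < 1)
    (hlam : 0 < lam) (hmu : 0 < mu) (ht : 0 < t)
    (hmin : ∀ v : ℝ, (z - t) ^ 2 / (2 * mu) + lam * |t| ^ q ≤
      (z - v) ^ 2 / (2 * mu) + lam * |v| ^ q) :
    2 * lam * mu * (1 - q) ≤ t ^ (2 - q) := by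
  set f : ℝ → ℝ := fun v => (z - v) ^ 2 / (2 * mu) + lam * |v| ^ q with hf
  have h1 : HasDerivAt (fun v : ℝ => (z - v) ^ 2 / (2 * mu))
      ((2 * (z - t) * (-1)) / (2 * mu)) t := by
    have : HasDerivAt (fun v : ℝ => z - v) (-1) t := by
      simpa using (hasDerivAt_id t).const_sub z
    simpa using (this.pow 2).div_const (2 * mu)
  have h2 : HasDerivAt (fun v : ℝ => lam * |v| ^ q) (lam * (q * t ^ (q - 1))) t := by
    have hb : HasDerivAt (fun v : ℝ => v ^ q) (q * t ^ (q - 1)) t :=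
      Real.hasDerivAt_rpow_const (Or.inl ht.ne')
    refine (hb.const_mul lam).congr_of_eventuallyEq ?_
    filter_upwards [eventually_gt_nhds ht] with v hv
    rw [abs_of_pos hv]
  have hderiv : HasDerivAt f ((2 * (z - t) * (-1)) / (2 * mu) + lam * (q * t ^ (q - 1))) t :=
    h1.add h2
  have hloc : IsLocalMin f t := Filter.Eventually.of_forall hmin
  have hd0 : (2 * (z - t) * (-1)) / (2 * mu) + lam * (q * t ^ (q - 1)) = 0 :=
    hloc.hasDerivAt_eq_zero hderiv
  have hfo : z - t = lam * mu * q * t ^ (q - 1) := by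
    field_simp at hd0
    nlinarith [hd0]
  have h0 := hmin 0
  have habs : |t| = t := abs_of_pos ht
  have hz0 : |(0 : ℝ)| ^ q = 0 := by
    rw [abs_zero, Real.zero_rpow hq0.ne']
  rw [habs, hz0, sub_zero, mul_zero, add_zero] at h0
  have hmu2 : (0:ℝ) < 2 * mu := by linarith
  have key : (z - t) ^ 2 + 2 * mu * (lam * t ^ q) ≤ z ^ 2 := by
    rw [div_add' _ _ _ hmu2.ne', div_le_div_iff₀ hmu2 hmu2] at h0
    nlinarith [h0]
  have htq : t ^ (q - 1) * t = t ^ q := by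
    nth_rewrite 2 [← Real.rpow_one t]
    rw [← Real.rpow_add ht, sub_add_cancel]
  have h5 : t * (z - t) = lam * mu * q * t ^ q := by
    rw [hfo, ← htq]; ring
  have key2 : 2 * lam * mu * (1 - q) * t ^ q ≤ t ^ 2 := by
    nlinarith [key, h5]
  have hsplit : (t : ℝ) ^ 2 = t ^ q * t ^ (2 - q) := by
    rw [← Real.rpow_add ht, ← Real.rpow_two]
    norm_num
  have hpos : (0:ℝ) < t ^ q := Real.rpow_pos_of_pos ht q
  rw [hsplit] at key2
  have := (mul_le_mul_iff_of_pos_right hpos).mp (by linarith [key2] : 2 * lam * mu * (1 - q) * t ^ q ≤ t ^ (2 - q) * t ^ q)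
  exact this

/-- Any minimizer of `v ↦ (z-v)²/(2μ) + λ|v|^q` over `ℝ` is either `0`
or has magnitude at least `η = (2λμ(1-q))^(1/(2-q))`. -/
theorem prox_minimizer_zero_or_large (q lam mu z vstar : ℝ) (hq0 : 0 < q) (hq1 : q < 1)
    (hlam : 0 < lam) (hmu : 0 < mu)
    (hmin : ∀ v : ℝ, (z - vstar) ^ 2 / (2 * mu) + lam * |vstar| ^ q ≤
      (z - v) ^ 2 / (2 * mu) + lam * |v| ^ q) :
    vstar = 0 ∨ (2 * lam * mu * (1 - q)) ^ ((1 : ℝ) / (2 - q)) ≤ |vstar| := by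
  rcases eq_or_ne vstar 0 with h | h
  · exact Or.inl h
  right
  have ht : 0 < |vstar| := abs_pos.mpr h
  have hkey : 2 * lam * mu * (1 - q) ≤ |vstar| ^ (2 - q) := by
    rcases lt_or_gt_of_ne h with hneg | hpos
    · -- vstar < 0 : use z' = -z, t = -vstar
      rw [abs_of_neg hneg]
      refine prox_aux q lam mu (-z) (-vstar) hq0 hq1 hlam hmu (by linarith) ?_
      intro v
      have h' := hmin (-v)
      have e1 : (-z - -vstar) ^ 2 = (z - vstar) ^ 2 := by ring
      have e2 : (-z - v) ^ 2 = (z - -v) ^ 2 := by ring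
      rw [e1, e2, abs_neg vstar, ← abs_neg v]
      exact h'
    · rw [abs_of_pos hpos]
      exact prox_aux q lam mu z vstar hq0 hq1 hlam hmu hpos hmin
  have hbase : (0:ℝ) ≤ 2 * lam * mu * (1 - q) := by nlinarith [mul_pos hlam hmu]
  have h2q0 : (0:ℝ) < 2 - q := by linarith
  have h2q : (2 : ℝ) - q ≠ 0 := h2q0.ne'
  have := Real.rpow_le_rpow hbase hkey (one_div_nonneg.mpr h2q0.le)
  rwa [← Real.rpow_mul (abs_nonneg vstar), mul_one_div, div_self h2q, Real.rpow_one] at this
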